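/- Let W be a real Hilbert space, 0 < α ≤ C_M, C_R > 0, M : W →L[ℝ] W self-adjoint with α‖φ‖² ≤ ⟪M φ, φ⟫ ≤ C_M‖φ‖², R : W →L[ℝ] W with ‖R‖ ≤ C_R and ⟪R φ, φ⟫ ≥ 0 for all φ ∈ W, and V ⊆ W a closed subspace. Let e_i, e_j ∈ W, let w_i ∈ V satisfy ⟪M(e_i + w_i), v⟫ = 0 for all v ∈ V, and let n_j ∈ V satisfy ⟪M(e_j - n_j), v⟫ = 0 for all v ∈ V. Let S : V →L[ℝ] V satisfy ⟪M(S φ), ψ⟫ = ⟪R φ, ψ⟫ for all φ, ψ ∈ V. Then for every t ≥ 0: |⟪R(exp(-t S) n_j), e_i + w_i⟫| ≤ 2 (C_R C_M / α) ‖e_j‖ ‖e_i‖. -/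

import Mathlib

open RealInnerProductSpace NormedSpace

set_option maxHeartbeats 1000000
set_option synthInstance.maxHeartbeats 1000000

/-- Cauchy–Schwarz for the positive symmetric bilinear form `⟪M ·, ·⟫`. -/
lemma mcs_aux {W : Type*} [NormedAddCommGroup W] [InnerProductSpace ℝ W]
    (M : W →L[ℝ] W) (hMsa : ∀ φ ψ : W, ⟪M φ, ψ⟫ = ⟪φ, M ψ⟫)
    (hpos : ∀ φ : W, 0 ≤ ⟪M φ, φ⟫) (φ ψ : W) :
    ⟪M φ, ψ⟫ ^ 2 ≤ ⟪M φ, φ⟫ * ⟪M ψ, ψ⟫ := by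
  have hsym : ⟪M ψ, φ⟫ = ⟪M φ, ψ⟫ := by rw [hMsa, real_inner_comm]
  have key : ∀ x : ℝ, 0 ≤ ⟪M ψ, ψ⟫ * (x * x) + (2 * ⟪M φ, ψ⟫) * x + ⟪M φ, φ⟫ := by
    intro x
    have h := hpos (φ + x • ψ)
    have hexp : ⟪M (φ + x • ψ), φ + x • ψ⟫
        = ⟪M ψ, ψ⟫ * (x * x) + (2 * ⟪M φ, ψ⟫) * x + ⟪M φ, φ⟫ := by
      simp only [map_add, map_smul, inner_add_left, inner_add_right,
        inner_smul_left, inner_smul_right, RCLike.inner_apply, conj_trivial, hsym]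
      ring
    rw [hexp] at h
    exact h
  have hd := discrim_le_zero key
  rw [discrim] at hd
  nlinarith [hd]

/-- Abstract version of the entry bound, over an abstract Banach space `E`
embedded into `W` by a continuous linear map `ι`. -/
lemma effective_extra_source_entry_bound_aux
    {W : Type*} [NormedAddCommGroup W] [InnerProductSpace ℝ W]
    {E : Type*} [NormedAddCommGroup E] [NormedSpace ℝ E] [CompleteSpace E]
    (α C_M C_R : ℝ) (hα : 0 < α) (hαC : α ≤ C_M) (hCR : 0 < C_R)
    (M : W →L[ℝ] W) (hMsa : ∀ φ ψ : W, ⟪M φ, ψ⟫ = ⟪φ, M ψ⟫)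
    (hMl : ∀ φ : W, α * ‖φ‖ ^ 2 ≤ ⟪M φ, φ⟫)
    (hMu : ∀ φ : W, ⟪M φ, φ⟫ ≤ C_M * ‖φ‖ ^ 2)
    (R : W →L[ℝ] W) (hR : ‖R‖ ≤ C_R) (hRpos : ∀ φ : W, 0 ≤ ⟪R φ, φ⟫)
    (ι : E →L[ℝ] W)
    (e_i e_j : W) (w_i : E)
    (hwi : ⟪M (e_i + ι w_i), ι w_i⟫ = 0)
    (n_j : E) (hn : ⟪M (e_j - ι n_j), ι n_j⟫ = 0)
    (S : E →L[ℝ] E)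
    (hS : ∀ φ ψ : E, ⟪M (ι (S φ)), ι ψ⟫ = ⟪R (ι φ), ι ψ⟫)
    (t : ℝ) (ht : 0 ≤ t) :
    |⟪R (ι (∑' n : ℕ, (((-t) ^ n / n.factorial : ℝ) • ((S ^ n) n_j)))),
        e_i + ι w_i⟫| ≤ 2 * (C_R * C_M / α) * ‖e_j‖ * ‖e_i‖ := by
  have hMpos : ∀ φ : W, 0 ≤ ⟪M φ, φ⟫ := fun φ => le_trans (by positivity) (hMl φ)
  have mcs := mcs_aux M hMsa hMpos
  set B : E →L[ℝ] E := -S with hB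
  set u : ℝ → E := fun s => exp (s • B) n_j with hu
  -- identify the tsum with the exponential applied to `n_j`
  have hident : ∀ s : ℝ, (∑' n : ℕ, (((-s) ^ n / n.factorial : ℝ) • ((S ^ n) n_j))) = u s := by
    intro s
    have hts : s • B = (-s) • S := by
      rw [hB]; rw [smul_neg, ← neg_smul]
    have hsumm : Summable fun n : ℕ => ((n.factorial : ℝ)⁻¹) • (s • B) ^ n :=
      expSeries_summable' (𝕂 := ℝ) (s • B)
    have h2 : u s = ∑' n : ℕ, (((n.factorial : ℝ)⁻¹) • (s • B) ^ n) n_j := by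
      rw [hu]
      simp only [exp_eq_tsum ℝ]
      exact (ContinuousLinearMap.apply ℝ E n_j).map_tsum hsumm
    rw [h2]
    refine tsum_congr fun n => ?_
    rw [hts, smul_pow]
    simp only [ContinuousLinearMap.smul_apply, smul_smul, div_eq_mul_inv]
    ring_nf
  -- derivative of the trajectory
  have hderiv : ∀ s : ℝ, HasDerivAt u (B (u s)) s := by
    intro s
    have h1 : HasDerivAt (fun r : ℝ => exp (r • B)) (B * exp (s • B)) s :=
      hasDerivAt_exp_smul_const' (𝕂 := ℝ) B s
    have h2 := h1.clm_apply (hasDerivAt_const s n_j)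
    simpa using h2
  -- the energy function and its derivative
  set g : ℝ → ℝ := fun s => ⟪M (ι (u s)), ι (u s)⟫ with hg
  have hgderiv : ∀ s : ℝ, HasDerivAt g (-(2 * ⟪R (ι (u s)), ι (u s)⟫)) s := by
    intro s
    have hf : HasDerivAt (fun r : ℝ => ι (u r)) (ι (B (u s))) s :=
      ι.hasFDerivAt.comp_hasDerivAt s (hderiv s)
    have hMf : HasDerivAt (fun r : ℝ => M (ι (u r))) (M (ι (B (u s)))) s :=
      M.hasFDerivAt.comp_hasDerivAt s hf
    have hd := hMf.inner (𝕜 := ℝ) hf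
    have hBc : ι (B (u s)) = -(ι (S (u s))) := by
      rw [hB]; simp
    have e1 : ⟪M (ι (B (u s))), ι (u s)⟫ = -⟪R (ι (u s)), ι (u s)⟫ := by
      rw [hBc, map_neg, inner_neg_left, hS]
    have e2 : ⟪M (ι (u s)), ι (B (u s))⟫ = -⟪R (ι (u s)), ι (u s)⟫ := by
      rw [hMsa, real_inner_comm, hBc, map_neg, inner_neg_left, hS]
    refine hd.congr_deriv ?_
    rw [e1, e2]; ring
  have hanti : Antitone g := by
    refine antitone_of_deriv_nonpos (fun s => (hgderiv s).differentiableAt) fun s => ?_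
    rw [(hgderiv s).deriv]
    have := hRpos (ι (u s))
    linarith
  -- initial value
  have hu0 : u 0 = n_j := by
    rw [hu]; simp [exp_zero]
  -- energy at time t is bounded by ⟪M e_j, e_j⟫
  set x : W := ι (u t) with hx
  have hnjn : ⟪M (ι n_j), ι n_j⟫ ≤ ⟪M e_j, e_j⟫ := by
    rw [map_sub, inner_sub_left, sub_eq_zero] at hn
    have hcs := mcs e_j (ι n_j)
    have h1 := hMpos (ι n_j)
    have h2 := hMpos e_j
    nlinarith [hcs, hn]
  have hMx : ⟪M x, x⟫ ≤ C_M * ‖e_j‖ ^ 2 := by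
    have h1 : g t ≤ g 0 := hanti ht
    have h2 : g 0 = ⟪M (ι n_j), ι n_j⟫ := by rw [hg]; simp [hu0]
    calc ⟪M x, x⟫ = g t := rfl
    _ ≤ g 0 := h1
    _ = ⟪M (ι n_j), ι n_j⟫ := h2
    _ ≤ ⟪M e_j, e_j⟫ := hnjn
    _ ≤ C_M * ‖e_j‖ ^ 2 := hMu e_j
  have hxn : ‖x‖ ^ 2 ≤ C_M / α * ‖e_j‖ ^ 2 := by
    have := hMl x
    rw [div_mul_eq_mul_div, le_div_iff₀ hα]
    nlinarith
  -- bound on ‖ι w_i‖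
  have hwn : ‖ι w_i‖ ^ 2 ≤ C_M / α * ‖e_i‖ ^ 2 := by
    rw [map_add, inner_add_left, add_eq_zero_iff_eq_neg] at hwi
    have hMw : ⟪M (ι w_i), ι w_i⟫ ≤ C_M * ‖e_i‖ ^ 2 := by
      have hcs := mcs e_i (ι w_i)
      have h1 := hMpos (ι w_i)
      have h2 := hMpos e_i
      have h3 := hMu e_i
      nlinarith [hcs]
    have := hMl (ι w_i)
    rw [div_mul_eq_mul_div, le_div_iff₀ hα]
    nlinarith
  -- put everything together
  rw [hident t]
  set k : ℝ := C_M / α with hk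
  have hk1 : 1 ≤ k := (one_le_div hα).mpr hαC
  have hk0 : 0 ≤ k := le_trans zero_le_one hk1
  have hX : ‖x‖ ≤ k * ‖e_j‖ := by
    have h1 : ‖x‖ ^ 2 ≤ (k * ‖e_j‖) ^ 2 := by nlinarith [norm_nonneg e_j, hxn]
    have h2 : (0:ℝ) ≤ k * ‖e_j‖ := by positivity
    nlinarith [norm_nonneg x, h1, h2]
  have hXw : ‖x‖ * ‖ι w_i‖ ≤ k * ‖e_j‖ * ‖e_i‖ := by
    have h1 : (‖x‖ * ‖ι w_i‖) ^ 2 ≤ (k * ‖e_j‖ * ‖e_i‖) ^ 2 := by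
      nlinarith [norm_nonneg x, norm_nonneg (ι w_i), norm_nonneg e_i, norm_nonneg e_j, hxn, hwn]
    have h2 : (0:ℝ) ≤ k * ‖e_j‖ * ‖e_i‖ := by positivity
    nlinarith [mul_nonneg (norm_nonneg x) (norm_nonneg (ι w_i)), h1, h2]
  calc |⟪R x, e_i + ι w_i⟫| ≤ ‖R x‖ * ‖e_i + ι w_i‖ := abs_real_inner_le_norm _ _
    _ ≤ (C_R * ‖x‖) * (‖e_i‖ + ‖ι w_i‖) := by
        refine mul_le_mul ?_ (norm_add_le _ _) (norm_nonneg _) (by positivity)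
        exact le_trans (R.le_opNorm x) (mul_le_mul_of_nonneg_right hR (norm_nonneg x))
    _ = C_R * (‖x‖ * ‖e_i‖ + ‖x‖ * ‖ι w_i‖) := by ring
    _ ≤ C_R * (k * ‖e_j‖ * ‖e_i‖ + k * ‖e_j‖ * ‖e_i‖) := by
        refine mul_le_mul_of_nonneg_left (add_le_add ?_ hXw) (le_of_lt hCR)
        exact mul_le_mul_of_nonneg_right hX (norm_nonneg e_i)
    _ = 2 * (C_R * C_M / α) * ‖e_j‖ * ‖e_i‖ := by rw [hk]; ring

/-- The entry bound `|J⁰(t)_{i,j}| ≤ 2 C_R C_M / α · ‖e_j‖‖e_i‖` for the effective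
extra source.  Here `∑' n, ((-t)ⁿ/n!) • (Sⁿ n_j)` is the power-series exponential
`exp (-t S)` of the bounded operator `S` applied to `n_j`. -/
theorem effective_extra_source_entry_bound
    {W : Type*} [NormedAddCommGroup W] [InnerProductSpace ℝ W] [CompleteSpace W]
    (α C_M C_R : ℝ) (hα : 0 < α) (hαC : α ≤ C_M) (hCR : 0 < C_R)
    (M : W →L[ℝ] W) (hMsa : ∀ φ ψ : W, ⟪M φ, ψ⟫ = ⟪φ, M ψ⟫)
    (hMl : ∀ φ : W, α * ‖φ‖ ^ 2 ≤ ⟪M φ, φ⟫)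
    (hMu : ∀ φ : W, ⟪M φ, φ⟫ ≤ C_M * ‖φ‖ ^ 2)
    (R : W →L[ℝ] W) (hR : ‖R‖ ≤ C_R) (hRpos : ∀ φ : W, 0 ≤ ⟪R φ, φ⟫)
    (V : Submodule ℝ W) (hV : IsClosed (V : Set W))
    (e_i e_j w_i : W) (hwiV : w_i ∈ V)
    (hwi : ∀ v ∈ V, ⟪M (e_i + w_i), v⟫ = 0)
    (n_j : V) (hn : ∀ v ∈ V, ⟪M (e_j - (n_j : W)), v⟫ = 0)
    (S : V →L[ℝ] V)
    (hS : ∀ φ ψ : V, ⟪M (S φ : W), (ψ : W)⟫ = ⟪R (φ : W), (ψ : W)⟫)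
    (t : ℝ) (ht : 0 ≤ t) :
    |⟪R (((∑' n : ℕ, (((-t) ^ n / n.factorial : ℝ) • ((S ^ n) n_j)) : V) : W)),
        e_i + w_i⟫| ≤ 2 * (C_R * C_M / α) * ‖e_j‖ * ‖e_i‖ := by
  haveI : CompleteSpace V := hV.completeSpace_coe
  have h := effective_extra_source_entry_bound_aux α C_M C_R hα hαC hCR M hMsa hMl hMu
    R hR hRpos V.subtypeL e_i e_j ⟨w_i, hwiV⟩
    (by simpa using hwi w_i hwiV) n_j
    (by simpa using hn (n_j : W) n_j.2) S
    (fun φ ψ => by simpa using hS φ ψ) t ht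
  simpa using h
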